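/- Let ⟨F, T⟩ be an epistemic causal model over a signature, O any subset of the variables, and S* the corresponding signature with observables O. Suppose that for some A ∈ T, the pair (⟨F, T⟩, A) satisfies, under the semantics without observables ⊨^W, every instance of the axiom scheme (OC) for S*, i.e., [X⃗:=x⃗] ⋁_{o⃗ ∈ R(O)} K(O=o⃗). Then: (1) all valuations in T agree on the values of all variables in O, so ⟨F, T⟩ is an epistemic causal model with observables O; and (2) for every B ∈ T and every L_PAKC formula φ, (⟨F, T⟩, B) satisfies φ under ⊨^W if and only if it satisfies φ under the semantics with observables ⊨^O. -/

import Mathlib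

open Classical

/-- A finite signature: variables sorted into exogenous and endogenous, each with a
finite nonempty range of values. -/
structure Sig : Type 1 where
  Var : Type
  exo : Var → Prop
  Val : Var → Type
  [decEqVar : DecidableEq Var]
  [finVar : Fintype Var]
  [neVar : Nonempty Var]
  [decEqVal : ∀ X : Var, DecidableEq (Val X)]
  [finVal : ∀ X : Var, Fintype (Val X)]
  [neVal : ∀ X : Var, Nonempty (Val X)]

attribute [instance] Sig.decEqVar Sig.finVar Sig.neVar Sig.decEqVal Sig.finVal Sig.neVal

variable {S : Sig}

/-- A valuation: a value for each variable. -/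
abbrev Env (S : Sig) : Type := ∀ X : S.Var, S.Val X

instance : Nonempty (Env S) := ⟨fun X => Classical.arbitrary (S.Val X)⟩

/-- Values for all variables other than `V`. -/
abbrev Others (S : Sig) (V : S.Var) : Type := ∀ X : {X : S.Var // X ≠ V}, S.Val X.val

/-- The restriction of a valuation to the variables other than `V`. -/
def Env.restrict (A : Env S) (V : S.Var) : Others S V := fun X => A X.val

/-- A family of structural functions (only the components at endogenous variables
are meaningful). -/
abbrev StructFuns (S : Sig) : Type := ∀ V : S.Var, Others S V → S.Val V

/-- A valuation complies with the structural functions: the value of each endogenous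
variable is obtained by applying its structural function to the values of all
other variables. -/
def Complies (F : StructFuns S) (A : Env S) : Prop :=
  ∀ V : S.Var, ¬ S.exo V → A V = F V (A.restrict V)

/-- The endogenous variable `V` is directly causally affected by `X` under `F`. -/
def DirAff (F : StructFuns S) (X V : S.Var) : Prop :=
  ¬ S.exo V ∧ ∃ (h : X ≠ V) (g : Others S V) (x₁ x₂ : S.Val X),
    x₁ ≠ x₂ ∧
      F V (Function.update g ⟨X, h⟩ x₁) ≠ F V (Function.update g ⟨X, h⟩ x₂)

/-- `F` is recursive: the transitive closure of the direct causal dependence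
relation is asymmetric (transitivity is automatic for `Relation.TransGen`). -/
def RecursiveF (F : StructFuns S) : Prop :=
  ∀ a b : S.Var, Relation.TransGen (DirAff F) a b → ¬ Relation.TransGen (DirAff F) b a

/-- An assignment of values to a set of pairwise distinct variables. -/
abbrev Intervention (S : Sig) : Type := ∀ X : S.Var, Option (S.Val X)

/-- The empty assignment. -/
def iEmpty (S : Sig) : Intervention S := fun _ => none

/-- Extend an assignment by additionally setting `Y` to `y` (overriding). -/
def iUpd (I : Intervention S) (Y : S.Var) (y : S.Val Y) : Intervention S :=
  Function.update I Y (some y)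

/-- Combine assignments, the second overriding the first:  `[X⃗ := x⃗, Y⃗ := y⃗]`. -/
def icomp (I J : Intervention S) : Intervention S := fun W =>
  match J W with
  | some v => some v
  | none => I W

/-- The intervened family of structural functions: intervened variables get the
constant function returning the assigned value; the rest are unchanged. -/
def intF (F : StructFuns S) (I : Intervention S) : StructFuns S :=
  fun V g => (I V).getD (F V g)

/-- `A'` is the result of intervening with `I` on the valuation `A` (w.r.t. `F`):
exogenous intervened variables get the assigned value, exogenous non-intervened
variables keep their value, and each endogenous variable complies with its new
structural function. -/
def IntervenedVal (F : StructFuns S) (A : Env S) (I : Intervention S) (A' : Env S) : Prop :=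
  (∀ X : S.Var, S.exo X → ∀ v : S.Val X, I X = some v → A' X = v) ∧
  (∀ X : S.Var, S.exo X → I X = none → A' X = A X) ∧
  (∀ V : S.Var, ¬ S.exo V → A' V = intF F I V (A'.restrict V))

/-- The intervened valuation (unique when `F` is recursive). -/
noncomputable def intVal (F : StructFuns S) (A : Env S) (I : Intervention S) : Env S :=
  Classical.epsilon (IntervenedVal F A I)

/-- The language L_PAKC: atoms `Y = y`, negation, conjunction, knowledge,
public announcements, and interventionist counterfactual operators. -/
inductive Form (S : Sig) : Type where
  | eq (Y : S.Var) (y : S.Val Y) : Form S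
  | neg (φ : Form S) : Form S
  | conj (φ ψ : Form S) : Form S
  | know (φ : Form S) : Form S
  | ann (α φ : Form S) : Form S
  | int (I : Intervention S) (φ : Form S) : Form S

namespace Form

/-- Material implication, defined from `¬` and `∧` as usual. -/
def impl (φ ψ : Form S) : Form S := Form.neg (Form.conj φ (Form.neg ψ))

/-- Disjunction, defined from `¬` and `∧` as usual. -/
def orF (φ ψ : Form S) : Form S := Form.neg (Form.conj (Form.neg φ) (Form.neg ψ))

/-- Biconditional. -/
def iffF (φ ψ : Form S) : Form S := Form.conj (impl φ ψ) (impl ψ φ)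

end Form

/-- A canonical contradiction. -/
noncomputable def botF (S : Sig) : Form S :=
  let X : S.Var := Classical.arbitrary S.Var
  let x : S.Val X := Classical.arbitrary (S.Val X)
  Form.conj (Form.eq X x) (Form.neg (Form.eq X x))

/-- A canonical tautology. -/
noncomputable def topF (S : Sig) : Form S := Form.neg (botF S)

/-- Disjunction of a list of formulas (the empty disjunction is a contradiction). -/
noncomputable def bigOr : List (Form S) → Form S
  | [] => botF S
  | φ :: l => l.foldl Form.orF φ

/-- Conjunction of a list of formulas (the empty conjunction is a tautology). -/
noncomputable def bigConj : List (Form S) → Form S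
  | [] => topF S
  | φ :: l => l.foldl Form.conj φ

/-- `φ` is an instance of a propositional tautology: it evaluates to `true` under
every Boolean valuation that respects negation and conjunction (treating all
other formulas as atoms). -/
def Tauto (φ : Form S) : Prop :=
  ∀ v : Form S → Bool,
    (∀ ψ : Form S, v (Form.neg ψ) = !(v ψ)) →
    (∀ ψ χ : Form S, v (Form.conj ψ χ) = (v ψ && v χ)) →
    v φ = true

/-- The assignment `[Z⃗ := z⃗, X := x]` where `Z⃗` lists all variables other than
`X` and `V`, used in the formula `X ⇝ V`. -/
def ltInt (X V : S.Var) (g : ∀ W : {W : S.Var // W ≠ X ∧ W ≠ V}, S.Val W.val)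
    (x : S.Val X) : Intervention S := fun W =>
  if h : W = X then some (h.symm ▸ x)
  else if h' : W = V then none
  else some (g ⟨W, ⟨h, h'⟩⟩)

/-- The formula `X ⇝ V`: the disjunction, over tuples `z⃗` of values for all
variables other than `X` and `V`, distinct values `x₁ ≠ x₂` of `X` and distinct
values `v₁ ≠ v₂` of `V`, of `[Z⃗:=z⃗, X:=x₁]V=v₁ ∧ [Z⃗:=z⃗, X:=x₂]V=v₂`. -/
noncomputable def leadsTo (X V : S.Var) : Form S :=
  bigOr ((Finset.univ.filter
      (fun p : (∀ W : {W : S.Var // W ≠ X ∧ W ≠ V}, S.Val W.val) ×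
          (S.Val X × S.Val X) × (S.Val V × S.Val V) =>
        p.2.1.1 ≠ p.2.1.2 ∧ p.2.2.1 ≠ p.2.2.2)).toList.map
    (fun p =>
      Form.conj
        (Form.int (ltInt X V p.1 p.2.1.1) (Form.eq V p.2.2.1))
        (Form.int (ltInt X V p.1 p.2.1.2) (Form.eq V p.2.2.2))))

/-- The chain `X₀ ⇝ X₁ ∧ ⋯ ∧ X_k ⇝ X_{k+1}`. -/
noncomputable def chainConj (X : ℕ → S.Var) : ℕ → Form S
  | 0 => leadsTo (X 0) (X 1)
  | n + 1 => Form.conj (chainConj X n) (leadsTo (X (n + 1)) (X (n + 2)))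

/-- `ψ₁ → (ψ₂ → ⋯ → (ψₙ → φ))` for a list of premises. -/
def impsFrom : List (Form S) → Form S → Form S
  | [], φ => φ
  | ψ :: l, φ => Form.impl ψ (impsFrom l φ)

/-- Satisfaction of an L_PAKC formula at a pointed epistemic causal model
`(⟨F, T⟩, A)` (the semantics `⊨ᵂ`, without observables). -/
def SatW : Form S → StructFuns S → Set (Env S) → Env S → Prop
  | Form.eq Y y, _, _, A => A Y = y
  | Form.neg φ, F, T, A => ¬ SatW φ F T A
  | Form.conj φ ψ, F, T, A => SatW φ F T A ∧ SatW ψ F T A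
  | Form.know φ, F, T, _ => ∀ B ∈ T, SatW φ F T B
  | Form.ann α φ, F, T, A =>
      SatW α F T A → SatW φ F {B | B ∈ T ∧ SatW α F T B} A
  | Form.int I φ, F, T, A =>
      SatW φ (intF F I) ((fun B => intVal F B I) '' T) (intVal F A I)

/-- Satisfaction of an L_PAKC formula at a pointed epistemic causal model with
observables `Obs` (the semantics `⊨ᴼ`): after an intervention, the epistemic
state retains only those intervened valuations that agree with the intervened
actual valuation on all observables. -/
def SatO (Obs : Finset S.Var) : Form S → StructFuns S → Set (Env S) → Env S → Prop
  | Form.eq Y y, _, _, A => A Y = y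
  | Form.neg φ, F, T, A => ¬ SatO Obs φ F T A
  | Form.conj φ ψ, F, T, A => SatO Obs φ F T A ∧ SatO Obs ψ F T A
  | Form.know φ, F, T, _ => ∀ B ∈ T, SatO Obs φ F T B
  | Form.ann α φ, F, T, A =>
      SatO Obs α F T A → SatO Obs φ F {B | B ∈ T ∧ SatO Obs α F T B} A
  | Form.int I φ, F, T, A =>
      SatO Obs φ (intF F I)
        {B' | ∃ B ∈ T, B' = intVal F B I ∧ ∀ W ∈ Obs, B' W = intVal F A I W}
        (intVal F A I)

/-- The formula `O⃗ = o⃗`: the conjunction of `O = o⃗(O)` over the observables. -/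
noncomputable def obsEq (Obs : Finset S.Var)
    (o : ∀ W : {W : S.Var // W ∈ Obs}, S.Val W.val) : Form S :=
  bigConj (Obs.attach.toList.map (fun W => Form.eq W.val (o W)))

/-- All tuples of values for the observables (an enumeration of `R(O⃗)`). -/
noncomputable def obsTuples (Obs : Finset S.Var) :
    List (∀ W : {W : S.Var // W ∈ Obs}, S.Val W.val) :=
  (Finset.univ : Finset (∀ W : {W : S.Var // W ∈ Obs}, S.Val W.val)).toList

/-- Axiom (OC): `[X⃗:=x⃗] ⋁_{o⃗ ∈ R(O⃗)} K(O⃗=o⃗)`. -/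
noncomputable def ocForm (Obs : Finset S.Var) (I : Intervention S) : Form S :=
  Form.int I (bigOr ((obsTuples Obs).map (fun o => Form.know (obsEq Obs o))))

/-- Axiom (PD): `[X⃗:=x⃗]Kψ ↔ ⋁_{o⃗ ∈ R(O⃗)} ([X⃗:=x⃗]O⃗=o⃗ ∧ [[X⃗:=x⃗]O⃗=o⃗ !] K[X⃗:=x⃗]ψ)`. -/
noncomputable def pdForm (Obs : Finset S.Var) (I : Intervention S) (ψ : Form S) : Form S :=
  Form.iffF (Form.int I (Form.know ψ))
    (bigOr ((obsTuples Obs).map (fun o =>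
      Form.conj (Form.int I (obsEq Obs o))
        (Form.ann (Form.int I (obsEq Obs o)) (Form.know (Form.int I ψ))))))

section AuxProofs

attribute [local instance] Classical.propDecidable

variable {S : Sig}

/-- A structural function's value depends only on directly affecting variables. -/
lemma F_dep (F : StructFuns S) (V : S.Var) (hV : ¬ S.exo V) :
    ∀ (g h : Others S V),
      (∀ X : {X : S.Var // X ≠ V}, DirAff F X.val V → g X = h X) → F V g = F V h := by
  have key : ∀ (n : ℕ) (g h : Others S V),
      (∀ X : {X : S.Var // X ≠ V}, DirAff F X.val V → g X = h X) →
      (Finset.univ.filter (fun X : {X : S.Var // X ≠ V} => g X ≠ h X)).card = n →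
      F V g = F V h := by
    intro n
    induction n with
    | zero =>
      intro g h _ hcard
      have : ∀ X : {X : S.Var // X ≠ V}, g X = h X := by
        intro X
        by_contra hX
        have : X ∈ Finset.univ.filter (fun X : {X : S.Var // X ≠ V} => g X ≠ h X) := by
          simp [hX]
        simp [Finset.card_eq_zero] at hcard
        exact hX (hcard X.1 X.2)
      exact congrArg (F V) (funext this)
    | succ n ih =>
      intro g h hgh hcard
      have hne : (Finset.univ.filter (fun X : {X : S.Var // X ≠ V} => g X ≠ h X)).Nonempty := by
        rw [← Finset.card_pos, hcard]; omega
      obtain ⟨X, hX⟩ := hne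
      have hgX : g X ≠ h X := by simpa using hX
      set g' := Function.update g X (h X) with hg'
      have step : F V g = F V g' := by
        by_contra hFne
        have hDA : DirAff F X.val V := by
          refine ⟨hV, X.2, g, g X, h X, hgX, ?_⟩
        -- update g ⟨X.val, X.2⟩ (g X) = g
          have e1 : Function.update g ⟨X.val, X.2⟩ (g ⟨X.val, X.2⟩) = g :=
            Function.update_eq_self _ _
          simpa [e1] using hFne
        exact hgX (hgh X hDA)
      have hgh' : ∀ Y : {X : S.Var // X ≠ V}, DirAff F Y.val V → g' Y = h Y := by
        intro Y hY
        by_cases hYX : Y = X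
        · subst hYX; simp [hg']
        · rw [hg', Function.update_of_ne hYX]; exact hgh Y hY
      have hcard' :
          (Finset.univ.filter (fun Y : {X : S.Var // X ≠ V} => g' Y ≠ h Y)).card = n := by
        have hsub : Finset.univ.filter (fun Y : {X : S.Var // X ≠ V} => g' Y ≠ h Y) =
            (Finset.univ.filter (fun Y : {X : S.Var // X ≠ V} => g Y ≠ h Y)).erase X := by
          ext Y
          by_cases hYX : Y = X
          · subst hYX
            simp [hg', Function.update_self]
          · simp [hg', Function.update_of_ne hYX, hYX]
        rw [hsub, Finset.card_erase_of_mem hX, hcard]; omega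
      rw [step]
      exact ih g' h hgh' hcard'
  intro g h hgh
  exact key _ g h hgh rfl

/-- The direct-affection transitive closure is well-founded for a recursive family. -/
lemma wf_rel (F : StructFuns S) (hRec : RecursiveF F) :
    WellFounded (Relation.TransGen (DirAff F)) := by
  haveI : IsIrrefl S.Var (Relation.TransGen (DirAff F)) :=
    ⟨fun a h => hRec a a h h⟩
  exact Finite.wellFounded_of_trans_of_irrefl _

/-- A solution of the intervened structural equations, by well-founded recursion. -/
noncomputable def sol (F : StructFuns S) (hRec : RecursiveF F) (A : Env S)
    (I : Intervention S) : Env S :=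
  (wf_rel F hRec).fix (C := fun V => S.Val V)
    (fun V ih =>
      if S.exo V then
        match I V with
        | some v => v
        | none => A V
      else intF F I V (fun X =>
        if hr : Relation.TransGen (DirAff F) X.val V then ih X.val hr
        else Classical.arbitrary _))

lemma sol_spec (F : StructFuns S) (hRec : RecursiveF F) (A : Env S)
    (I : Intervention S) : IntervenedVal F A I (sol F hRec A I) := by
  have heq : ∀ V : S.Var, sol F hRec A I V =
      (if S.exo V then
        match I V with
        | some v => v
        | none => A V
      else intF F I V (fun X =>
        if _ : Relation.TransGen (DirAff F) X.val V then sol F hRec A I X.val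
        else Classical.arbitrary _)) := by
    intro V
    exact WellFounded.fix_eq _ _ _
  refine ⟨?_, ?_, ?_⟩
  · intro X hX v hIv
    rw [heq X, if_pos hX, hIv]
  · intro X hX hIn
    rw [heq X, if_pos hX, hIn]
  · intro V hV
    rw [heq V, if_neg hV]
    show intF F I V _ = intF F I V _
    unfold intF
    cases hIV : I V with
    | some v => rfl
    | none =>
      simp only [Option.getD_none]
      apply F_dep F V hV
      intro X hDA
      rw [dif_pos (Relation.TransGen.single hDA)]
      rfl

/-- Uniqueness of solutions of the intervened structural equations. -/
lemma int_unique {F : StructFuns S} (hRec : RecursiveF F) {A : Env S}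
    {I : Intervention S} {A' A'' : Env S}
    (h1 : IntervenedVal F A I A') (h2 : IntervenedVal F A I A'') : A' = A'' := by
  funext V
  induction V using (wf_rel F hRec).induction with
  | _ V ih =>
    by_cases hV : S.exo V
    · cases hIV : I V with
      | some v => rw [h1.1 V hV v hIV, h2.1 V hV v hIV]
      | none => rw [h1.2.1 V hV hIV, h2.2.1 V hV hIV]
    · rw [h1.2.2 V hV, h2.2.2 V hV]
      unfold intF
      cases hIV : I V with
      | some v => rfl
      | none =>
        simp only [Option.getD_none]
        apply F_dep F V hV
        intro X hDA
        exact ih X.val (Relation.TransGen.single hDA)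

lemma intVal_spec {F : StructFuns S} (hRec : RecursiveF F) (A : Env S)
    (I : Intervention S) : IntervenedVal F A I (intVal F A I) :=
  Classical.epsilon_spec ⟨sol F hRec A I, sol_spec F hRec A I⟩

lemma intVal_eq {F : StructFuns S} (hRec : RecursiveF F) {A B : Env S}
    {I : Intervention S} (h : IntervenedVal F A I B) : intVal F A I = B :=
  int_unique hRec (intVal_spec hRec A I) h

lemma intVal_empty {F : StructFuns S} (hRec : RecursiveF F) {A : Env S}
    (hA : Complies F A) : intVal F A (iEmpty S) = A := by
  apply intVal_eq hRec
  refine ⟨?_, ?_, ?_⟩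
  · intro X _ v hv; simp [iEmpty] at hv
  · intro X _ _; rfl
  · intro V hV; simpa [intF, iEmpty] using hA V hV

lemma intF_comp (F : StructFuns S) (I J : Intervention S) :
    intF (intF F I) J = intF F (icomp I J) := by
  funext V g
  unfold intF icomp
  cases J V <;> rfl

lemma dirAff_intF {F : StructFuns S} {I : Intervention S} {X V : S.Var}
    (h : DirAff (intF F I) X V) : DirAff F X V := by
  obtain ⟨hV, hXV, g, x1, x2, hx, hne⟩ := h
  refine ⟨hV, hXV, g, x1, x2, hx, ?_⟩
  intro heq
  apply hne
  unfold intF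
  cases hIV : I V with
  | some v => rfl
  | none => simpa using heq

lemma rec_intF {F : StructFuns S} (hRec : RecursiveF F) (I : Intervention S) :
    RecursiveF (intF F I) := by
  intro a b hab hba
  exact hRec a b (Relation.TransGen.mono (fun _ _ => dirAff_intF) a b hab) (Relation.TransGen.mono (fun _ _ => dirAff_intF) b a hba)

lemma intVal_comp {F : StructFuns S} (hRec : RecursiveF F) (A : Env S)
    (I J : Intervention S) :
    intVal (intF F I) (intVal F A I) J = intVal F A (icomp I J) := by
  have hA' := intVal_spec hRec A I
  have hC := intVal_spec hRec A (icomp I J)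
  apply intVal_eq (rec_intF hRec I)
  refine ⟨?_, ?_, ?_⟩
  · intro X hX v hJ
    apply hC.1 X hX v
    simp [icomp, hJ]
  · intro X hX hJ
    cases hIX : I X with
    | some w =>
      rw [hA'.1 X hX w hIX]
      apply hC.1 X hX w
      simp [icomp, hJ, hIX]
    | none =>
      rw [hA'.2.1 X hX hIX]
      apply hC.2.1 X hX
      simp [icomp, hJ, hIX]
  · intro V hV
    rw [hC.2.2 V hV, intF_comp]

lemma satW_orF {φ ψ : Form S} {F : StructFuns S} {T : Set (Env S)} {A : Env S} :
    SatW (Form.orF φ ψ) F T A ↔ SatW φ F T A ∨ SatW ψ F T A := by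
  simp only [Form.orF, SatW]; tauto

lemma satW_foldl_orF {F : StructFuns S} {T : Set (Env S)} {A : Env S} :
    ∀ (l : List (Form S)) (φ : Form S), SatW (l.foldl Form.orF φ) F T A →
      SatW φ F T A ∨ ∃ ψ ∈ l, SatW ψ F T A := by
  intro l
  induction l with
  | nil => intro φ h; exact Or.inl h
  | cons ψ l ih =>
    intro φ h
    rcases ih _ h with h' | ⟨χ, hχ, hs⟩
    · rcases satW_orF.1 h' with h'' | h''
      · exact Or.inl h''
      · exact Or.inr ⟨ψ, List.mem_cons_self, h''⟩
    · exact Or.inr ⟨χ, List.mem_cons_of_mem _ hχ, hs⟩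

lemma satW_bigOr {F : StructFuns S} {T : Set (Env S)} {A : Env S}
    {l : List (Form S)} (h : SatW (bigOr l) F T A) : ∃ φ ∈ l, SatW φ F T A := by
  cases l with
  | nil =>
    exfalso
    simp only [bigOr, botF, SatW] at h
    exact h.2 h.1
  | cons φ l =>
    rcases satW_foldl_orF l φ h with h' | ⟨ψ, hψ, hs⟩
    · exact ⟨φ, List.mem_cons_self, h'⟩
    · exact ⟨ψ, List.mem_cons_of_mem _ hψ, hs⟩

lemma satW_foldl_conj {F : StructFuns S} {T : Set (Env S)} {A : Env S} :
    ∀ (l : List (Form S)) (φ : Form S), SatW (l.foldl Form.conj φ) F T A →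
      SatW φ F T A ∧ ∀ ψ ∈ l, SatW ψ F T A := by
  intro l
  induction l with
  | nil => intro φ h; exact ⟨h, by simp⟩
  | cons ψ l ih =>
    intro φ h
    obtain ⟨h1, h2⟩ := ih _ h
    exact ⟨h1.1, by
      intro χ hχ
      rcases List.mem_cons.1 hχ with rfl | hχ
      · exact h1.2
      · exact h2 χ hχ⟩

lemma satW_bigConj {F : StructFuns S} {T : Set (Env S)} {A : Env S}
    {l : List (Form S)} (h : SatW (bigConj l) F T A) : ∀ φ ∈ l, SatW φ F T A := by
  cases l with
  | nil => simp
  | cons φ l =>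
    intro ψ hψ
    obtain ⟨h1, h2⟩ := satW_foldl_conj l φ h
    rcases List.mem_cons.1 hψ with rfl | hψ
    · exact h1
    · exact h2 ψ hψ

lemma satW_obsEq {Obs : Finset S.Var} {o : ∀ W : {W : S.Var // W ∈ Obs}, S.Val W.val}
    {F : StructFuns S} {T : Set (Env S)} {B : Env S}
    (h : SatW (obsEq Obs o) F T B) : ∀ (W : S.Var) (hW : W ∈ Obs), B W = o ⟨W, hW⟩ := by
  intro W hW
  have hmem : Form.eq W (o ⟨W, hW⟩) ∈
      (Obs.attach.toList.map (fun W => Form.eq W.val (o W))) := by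
    apply List.mem_map.2
    exact ⟨⟨W, hW⟩, by simp, rfl⟩
  exact satW_bigConj h _ hmem

/-- Consequence of (OC): all intervened valuations of `T` agree on observables. -/
lemma agree_of_OC {Obs : Finset S.Var} {F : StructFuns S} {T : Set (Env S)}
    {A : Env S} (hA : A ∈ T)
    (hOC : ∀ I : Intervention S, SatW (ocForm Obs I) F T A) :
    ∀ (I : Intervention S), ∀ B ∈ T, ∀ C ∈ T, ∀ W ∈ Obs,
      intVal F B I W = intVal F C I W := by
  intro I B hB C hC W hW
  have h := hOC I
  simp only [ocForm, SatW] at h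
  obtain ⟨φ, hφmem, hφ⟩ := satW_bigOr h
  obtain ⟨o, _, rfl⟩ := List.mem_map.1 hφmem
  have h1 : SatW (obsEq Obs o) (intF F I) ((fun B => intVal F B I) '' T) (intVal F B I) :=
    hφ _ ⟨B, hB, rfl⟩
  have h2 : SatW (obsEq Obs o) (intF F I) ((fun B => intVal F B I) '' T) (intVal F C I) :=
    hφ _ ⟨C, hC, rfl⟩
  rw [satW_obsEq h1 W hW, satW_obsEq h2 W hW]

/-- Main equivalence: given recursiveness and observable-agreement of intervened
valuations, the two semantics coincide. -/
lemma main_equiv (Obs : Finset S.Var) :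
    ∀ (φ : Form S) (F' : StructFuns S) (T' : Set (Env S)),
      RecursiveF F' →
      (∀ I : Intervention S, ∀ B ∈ T', ∀ C ∈ T', ∀ W ∈ Obs,
        intVal F' B I W = intVal F' C I W) →
      ∀ B ∈ T', (SatW φ F' T' B ↔ SatO Obs φ F' T' B) := by
  intro φ
  induction φ with
  | eq Y y => intro F' T' _ _ B _; simp [SatW, SatO]
  | neg φ ih =>
    intro F' T' hrec hag B hB
    simp only [SatW, SatO]
    exact not_congr (ih F' T' hrec hag B hB)
  | conj φ ψ ihφ ihψ =>
    intro F' T' hrec hag B hB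
    simp only [SatW, SatO]
    exact and_congr (ihφ F' T' hrec hag B hB) (ihψ F' T' hrec hag B hB)
  | know φ ih =>
    intro F' T' hrec hag B hB
    simp only [SatW, SatO]
    constructor
    · intro h C hC; exact (ih F' T' hrec hag C hC).1 (h C hC)
    · intro h C hC; exact (ih F' T' hrec hag C hC).2 (h C hC)
  | ann α φ ihα ihφ =>
    intro F' T' hrec hag B hB
    have hsets : {C | C ∈ T' ∧ SatW α F' T' C} = {C | C ∈ T' ∧ SatO Obs α F' T' C} := by
      ext C
      exact and_congr_right fun hC => ihα F' T' hrec hag C hC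
    have hag' : ∀ I : Intervention S, ∀ B ∈ {C | C ∈ T' ∧ SatW α F' T' C},
        ∀ C ∈ {C | C ∈ T' ∧ SatW α F' T' C}, ∀ W ∈ Obs,
        intVal F' B I W = intVal F' C I W :=
      fun I B hB C hC W hW => hag I B hB.1 C hC.1 W hW
    simp only [SatW, SatO]
    constructor
    · intro h hα
      have hαW := (ihα F' T' hrec hag B hB).2 hα
      have hφW := h hαW
      rw [← hsets]
      exact (ihφ F' _ hrec hag' B ⟨hB, hαW⟩).1 hφW
    · intro h hα
      have hαO := (ihα F' T' hrec hag B hB).1 hα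
      have hφO := h hαO
      rw [← hsets] at hφO
      exact (ihφ F' _ hrec hag' B ⟨hB, hα⟩).2 hφO
  | int I φ ih =>
    intro F' T' hrec hag B hB
    simp only [SatW, SatO]
    have hsets : {B' | ∃ C ∈ T', B' = intVal F' C I ∧
        ∀ W ∈ Obs, B' W = intVal F' B I W} = (fun C => intVal F' C I) '' T' := by
      ext B'
      constructor
      · rintro ⟨C, hC, rfl, _⟩; exact ⟨C, hC, rfl⟩
      · rintro ⟨C, hC, rfl⟩
        exact ⟨C, hC, rfl, fun W hW => hag I C hC B hB W hW⟩
    rw [hsets]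
    have hag' : ∀ J : Intervention S, ∀ B' ∈ (fun C => intVal F' C I) '' T',
        ∀ C' ∈ (fun C => intVal F' C I) '' T', ∀ W ∈ Obs,
        intVal (intF F' I) B' J W = intVal (intF F' I) C' J W := by
      rintro J B' ⟨B₀, hB₀, rfl⟩ C' ⟨C₀, hC₀, rfl⟩ W hW
      rw [intVal_comp hrec B₀ I J, intVal_comp hrec C₀ I J]
      exact hag (icomp I J) B₀ hB₀ C₀ hC₀ W hW
    exact ih (intF F' I) _ (rec_intF hrec I) hag' (intVal F' B I) ⟨B, hB, rfl⟩

end AuxProofs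

/-- Theorem: let `⟨F, T⟩` be an epistemic causal model and `Obs` any set of
variables.  If some pointed model `(⟨F, T⟩, A)` satisfies every instance of the
axiom scheme (OC) for the signature with observables `Obs` under the semantics
without observables `⊨ᵂ`, then (1) all valuations of `T` agree on the values of
all observables, so `⟨F, T⟩` is an epistemic causal model with observables `Obs`,
and (2) at every point of `T`, the two semantics `⊨ᵂ` and `⊨ᴼ` agree on every
L_PAKC formula. -/
theorem oc_models_have_observables (S : Sig) (Obs : Finset S.Var)
    (F : StructFuns S) (T : Set (Env S))
    (hRec : RecursiveF F) (hne : T.Nonempty) (hComp : ∀ B ∈ T, Complies F B)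
    (A : Env S) (hA : A ∈ T)
    (hOC : ∀ I : Intervention S, SatW (ocForm Obs I) F T A) :
    (∀ B ∈ T, ∀ C ∈ T, ∀ W ∈ Obs, B W = C W) ∧
      (∀ B ∈ T, ∀ φ : Form S, (SatW φ F T B ↔ SatO Obs φ F T B)) := by
  have hagree := agree_of_OC hA hOC
  constructor
  · intro B hB C hC W hW
    have h := hagree (iEmpty S) B hB C hC W hW
    rwa [intVal_empty hRec (hComp B hB), intVal_empty hRec (hComp C hC)] at h
  · intro B hB φ
    exact main_equiv Obs φ F T hRec hagree B hB
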